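/- With ∂ = Σ_{i=0}^{n} q^i ∂_i on the (N,q)-complex of a simplicial set and q a primitive N-th root of unity, the N-fold composition ∂^N equals 0, since [N]_q = 0. -/

import Mathlib

noncomputable section

/-- The q-integer `[k]_q = 1 + q + ... + q^(k-1)`. -/
def qInt (q : ℂ) (k : ℕ) : ℂ := ∑ i ∈ Finset.range k, q ^ i

/-- The module of chains (over `ℂ ⊇ ℤ[q]`) on a simplicial set `S`. -/
abbrev ChainsS (S : ℕ → Type) : Type := (Σ n : ℕ, S n) →₀ ℂ

/-- The q-analog border map `∂ = ∑_{i=0}^{n} qⁱ ∂ᵢ` on the chains of a simplicial set. -/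
def qBorderS (q : ℂ) (S : ℕ → Type) (d : ∀ n : ℕ, Fin (n + 2) → S (n + 1) → S n) :
    ChainsS S →ₗ[ℂ] ChainsS S :=
  Finsupp.lsum ℂ fun s =>
    match s with
    | ⟨0, _⟩ => 0
    | ⟨n + 1, x⟩ => ∑ i : Fin (n + 2),
        q ^ (i : ℕ) • Finsupp.lsingle (⟨n, d n i x⟩ : Σ n : ℕ, S n)

namespace QBorderProof

/-! ### Generic list lemmas -/

/-- gap lemma for strictly increasing lists of naturals -/
theorem getD_gap : ∀ (J : List ℕ), J.Pairwise (· < ·) → ∀ u v : ℕ, u ≤ v → v < J.length →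
    J.getD u 0 + (v - u) ≤ J.getD v 0 := by
  intro J hJ u v huv hv
  induction v with
  | zero =>
    interval_cases u
    simp
  | succ v ih =>
    rcases Nat.eq_or_lt_of_le huv with h | h
    · subst h; simp
    · have hv' : v < J.length := by omega
      have h1 : J.getD u 0 + (v - u) ≤ J.getD v 0 := ih (by omega) hv'
      have h2 : J.getD v 0 < J.getD (v+1) 0 := by
        rw [List.getD_eq_getElem _ _ hv', List.getD_eq_getElem _ _ hv]
        exact List.pairwise_iff_getElem.mp hJ v (v+1) hv' hv (by omega)
      omega

theorem sorted_insertIdx : ∀ (J : List ℕ) (s v : ℕ), J.Pairwise (· < ·) → s ≤ J.length →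
    (∀ u, u < s → J.getD u 0 < v) → (∀ u, s ≤ u → u < J.length → v < J.getD u 0) →
    (J.insertIdx s v).Pairwise (· < ·) := by
  intro J
  induction J with
  | nil =>
    intro s v _ hs _ _
    have : s = 0 := by simpa using hs
    subst this
    simp
  | cons a J ih =>
    intro s v hJ hs hlow hhigh
    cases s with
    | zero =>
      rw [List.insertIdx_zero, List.pairwise_cons]
      refine ⟨?_, hJ⟩
      intro b hb
      rcases List.mem_cons.mp hb with rfl | hb
      · simpa using hhigh 0 (by omega) (by simp)
      · have hva : v < a := by simpa using hhigh 0 (by omega) (by simp)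
        have : a < b := (List.pairwise_cons.mp hJ).1 b hb
        omega
    | succ s =>
      rw [List.insertIdx_succ_cons, List.pairwise_cons]
      constructor
      · intro b hb
        rcases (List.mem_insertIdx (by simpa using Nat.succ_le_succ_iff.mp hs)).mp hb with rfl | hb
        · simpa using hlow 0 (by omega)
        · exact (List.pairwise_cons.mp hJ).1 b hb
      · refine ih s v (List.pairwise_cons.mp hJ).2 (by simpa using Nat.succ_le_succ_iff.mp hs)
          ?_ ?_
        · intro u hu
          simpa using hlow (u+1) (by omega)
        · intro u hsu hu
          simpa using hhigh (u+1) (by omega) (by simpa using Nat.succ_lt_succ hu)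

theorem sum_insertIdx' : ∀ (J : List ℕ) (s v : ℕ), s ≤ J.length →
    (J.insertIdx s v).sum = v + J.sum := by
  intro J
  induction J with
  | nil =>
    intro s v hs
    have : s = 0 := by simpa using hs
    subst this
    simp
  | cons a J ih =>
    intro s v hs
    cases s with
    | zero => simp
    | succ s =>
      rw [List.insertIdx_succ_cons, List.sum_cons, ih s v (by simpa using Nat.succ_le_succ_iff.mp hs),
        List.sum_cons]
      ring

theorem insertIdx_getD_eraseIdx : ∀ (L : List ℕ) (s : ℕ), s < L.length →
    (L.eraseIdx s).insertIdx s (L.getD s 0) = L := by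
  intro L
  induction L with
  | nil => intro s hs; simp at hs
  | cons a L ih =>
    intro s hs
    cases s with
    | zero => simp
    | succ s =>
      rw [List.getD_cons_succ, List.eraseIdx_cons_succ, List.insertIdx_succ_cons,
        ih s (by simpa using hs)]

/-- A downward-closed predicate: the filter over `range k` is an initial segment. -/
theorem filter_card_prefix (k : ℕ) (P : ℕ → Prop) [DecidablePred P]
    (hdc : ∀ a c : ℕ, a ≤ c → c < k → P c → P a) :
    (∀ u, u < ((Finset.range k).filter P).card → P u) ∧
      (∀ u, ((Finset.range k).filter P).card ≤ u → u < k → ¬ P u) := by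
  induction k with
  | zero => simp
  | succ k ih =>
    by_cases hPk : P k
    · have hall : ∀ u, u < k + 1 → P u := fun u hu => hdc u k (by omega) (by omega) hPk
      have : (Finset.range (k+1)).filter P = Finset.range (k+1) := by
        apply Finset.filter_true_of_mem
        intro u hu
        exact hall u (Finset.mem_range.mp hu)
      rw [this, Finset.card_range]
      exact ⟨fun u hu => hall u hu, fun u h1 h2 => by omega⟩
    · have hfil : (Finset.range (k+1)).filter P = (Finset.range k).filter P := by
        rw [Finset.range_add_one, Finset.filter_insert, if_neg hPk]
      have ih' := ih (fun a c hac hck hPc => hdc a c hac (by omega) hPc)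
      rw [hfil]
      refine ⟨ih'.1, fun u h1 h2 => ?_⟩
      rcases Nat.lt_or_ge u k with h | h
      · exact ih'.2 u h1 h
      · have : u = k := by omega
        subst this; exact hPk

theorem filter_card_eq (k s : ℕ) (P : ℕ → Prop) [DecidablePred P] (hs : s ≤ k)
    (hP : ∀ u, u < k → (P u ↔ u < s)) :
    ((Finset.range k).filter P).card = s := by
  have : (Finset.range k).filter P = Finset.range s := by
    ext u
    simp only [Finset.mem_filter, Finset.mem_range]
    constructor
    · rintro ⟨h1, h2⟩; exact (hP u h1).mp h2
    · intro h; exact ⟨by omega, (hP u (by omega)).mpr h⟩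
  rw [this, Finset.card_range]


theorem getD_insertIdx_self' : ∀ (J : List ℕ) (s v : ℕ), s ≤ J.length →
    (J.insertIdx s v).getD s 0 = v := by
  intro J
  induction J with
  | nil =>
    intro s v hs
    have : s = 0 := by simpa using hs
    subst this
    simp
  | cons a J ih =>
    intro s v hs
    cases s with
    | zero => simp
    | succ s =>
      rw [List.insertIdx_succ_cons, List.getD_cons_succ,
        ih s v (by simpa using Nat.succ_le_succ_iff.mp hs)]

theorem getD_eraseIdx_lt : ∀ (L : List ℕ) (s u : ℕ), u < s →
    (L.eraseIdx s).getD u 0 = L.getD u 0 := by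
  intro L
  induction L with
  | nil => intro s u _; simp
  | cons a L ih =>
    intro s u hu
    cases s with
    | zero => omega
    | succ s =>
      rw [List.eraseIdx_cons_succ]
      cases u with
      | zero => simp
      | succ u => rw [List.getD_cons_succ, List.getD_cons_succ, ih s u (by omega)]

theorem getD_eraseIdx_ge : ∀ (L : List ℕ) (s u : ℕ), s ≤ u →
    (L.eraseIdx s).getD u 0 = L.getD (u+1) 0 := by
  intro L
  induction L with
  | nil => intro s u _; simp
  | cons a L ih =>
    intro s u hsu
    cases s with
    | zero => rw [List.eraseIdx_cons_zero, List.getD_cons_succ]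
    | succ s =>
      rw [List.eraseIdx_cons_succ]
      cases u with
      | zero => omega
      | succ u => rw [List.getD_cons_succ, List.getD_cons_succ, ih s u (by omega)]

/-! ### The clamped face maps on `Σ n, S n` -/

variable {S : ℕ → Type}

/-- totalized, index-clamped face map -/
def fc (d : ∀ n : ℕ, Fin (n + 2) → S (n + 1) → S n) (i : ℕ) : (Σ n, S n) → (Σ n, S n)
  | ⟨0, x⟩ => ⟨0, x⟩
  | ⟨n+1, x⟩ => ⟨n, d n ⟨min i (n+1), by omega⟩ x⟩

variable (d : ∀ n : ℕ, Fin (n + 2) → S (n + 1) → S n)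

theorem fc_fst (i : ℕ) (t : Σ n, S n) : (fc d i t).1 = t.1 - 1 := by
  obtain ⟨(_|n), x⟩ := t <;> rfl

theorem fc_rel
    (hd : ∀ (n : ℕ) (i j : Fin (n + 2)), (j : ℕ) ≤ (i : ℕ) →
      ∀ x : S (n + 2), d n i (d (n + 1) j.castSucc x) = d n j (d (n + 1) i.succ x))
    (i j : ℕ) (hji : j ≤ i) (t : Σ n, S n) (ht : 2 ≤ t.1) :
    fc d i (fc d j t) = fc d j (fc d (i+1) t) := by
  obtain ⟨(_|_|m), x⟩ := t
  · simp at ht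
  · simp at ht
  · show (⟨m, d m ⟨min i (m+1), by omega⟩ (d (m+1) ⟨min j (m+2), by omega⟩ x)⟩ : Σ n, S n)
      = ⟨m, d m ⟨min j (m+1), by omega⟩ (d (m+1) ⟨min (i+1) (m+2), by omega⟩ x)⟩
    apply congrArg (fun y => (⟨m, y⟩ : Σ n, S n))
    rcases Nat.lt_or_ge i (m+2) with hi | hi
    · -- i ≤ m+1, hence j ≤ m+1
      have h1 : min i (m+1) = i := by omega
      have h2 : min j (m+2) = j := by omega
      have h3 : min j (m+1) = j := by omega
      have h4 : min (i+1) (m+2) = i+1 := by omega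
      simp only [h1, h2, h3, h4]
      have := hd m ⟨i, by omega⟩ ⟨j, by omega⟩ hji x
      simpa [Fin.castSucc, Fin.succ, Fin.castAdd, Fin.castLE] using this
    · rcases Nat.lt_or_ge j (m+2) with hj | hj
      · -- i ≥ m+2, j ≤ m+1
        have h1 : min i (m+1) = m+1 := by omega
        have h2 : min j (m+2) = j := by omega
        have h3 : min j (m+1) = j := by omega
        have h4 : min (i+1) (m+2) = m+2 := by omega
        simp only [h1, h2, h3, h4]
        have := hd m ⟨m+1, by omega⟩ ⟨j, by omega⟩ (by simpa using by omega : (j : ℕ) ≤ m+1) x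
        simpa [Fin.castSucc, Fin.succ, Fin.castAdd, Fin.castLE] using this
      · -- i ≥ m+2, j ≥ m+2
        have h1 : min i (m+1) = m+1 := by omega
        have h2 : min j (m+2) = m+2 := by omega
        have h3 : min j (m+1) = m+1 := by omega
        have h4 : min (i+1) (m+2) = m+2 := by omega
        simp only [h1, h2, h3, h4]

/-- iterated face maps along a list of indices (head applied last) -/
def DmL : List ℕ → (Σ n, S n) → (Σ n, S n)
  | [], t => t
  | a :: M, t => fc d a (DmL M t)

theorem DmL_fst (M : List ℕ) (t : Σ n, S n) : (DmL d M t).1 = t.1 - M.length := by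
  induction M with
  | nil => simp [DmL]
  | cons a M ih =>
    simp only [DmL, fc_fst, ih, List.length_cons]
    omega

/-- The key straightening lemma: moving one extra face map into a strictly
increasing monomial of face maps inserts it at the position determined by `s`. -/
theorem fc_DmL
    (hd : ∀ (n : ℕ) (i j : Fin (n + 2)), (j : ℕ) ≤ (i : ℕ) →
      ∀ x : S (n + 2), d n i (d (n + 1) j.castSucc x) = d n j (d (n + 1) i.succ x)) :
    ∀ (J : List ℕ) (i s : ℕ) (t : Σ n, S n), J.length + 1 ≤ t.1 → s ≤ J.length →
    (∀ u, u < s → J.getD u 0 ≤ i + u) →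
    (∀ u, s ≤ u → u < J.length → i + u < J.getD u 0) →
    fc d i (DmL d J t) = DmL d (J.insertIdx s (i+s)) t := by
  intro J
  induction J with
  | nil =>
    intro i s t _ hs _ _
    have : s = 0 := by simpa using hs
    subst this
    simp [DmL]
  | cons a J ih =>
    intro i s t hdeg hs h1 h2
    cases s with
    | zero =>
      rw [List.insertIdx_zero]
      show fc d i (DmL d (a :: J) t) = fc d (i+0) (DmL d (a :: J) t)
      norm_num
    | succ s =>
      have ha : a ≤ i := by simpa using h1 0 (by omega)
      rw [List.insertIdx_succ_cons]
      show fc d i (fc d a (DmL d J t)) = fc d a (DmL d (J.insertIdx s (i + (s+1))) t)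
      have hdeg2 : 2 ≤ (DmL d J t).1 := by
        rw [DmL_fst]
        simp only [List.length_cons] at hdeg
        omega
      rw [fc_rel d hd i a ha _ hdeg2]
      apply congrArg (fc d a)
      have := ih (i+1) s t (by simp only [List.length_cons] at hdeg; omega)
        (by simpa using Nat.succ_le_succ_iff.mp hs)
        (fun u hu => by have := h1 (u+1) (by omega); simp at this ⊢; omega)
        (fun u hsu hu => by
          have := h2 (u+1) (by omega) (by simpa using Nat.succ_lt_succ hu)
          simp at this ⊢; omega)
      rw [show i + (s + 1) = (i + 1) + s from by omega]
      exact this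

/-! ### Chain-level computations -/

variable (q : ℂ)

theorem border_single_zero (x : S 0) (c : ℂ) :
    qBorderS q S d (Finsupp.single ⟨0, x⟩ c) = 0 := by
  simp [qBorderS, Finsupp.lsum_single]

theorem border_single (t : Σ n, S n) (h : 1 ≤ t.1) :
    qBorderS q S d (Finsupp.single t 1)
      = ∑ i ∈ Finset.range (t.1 + 1), q ^ i • Finsupp.single (fc d i t) 1 := by
  obtain ⟨(_|n), x⟩ := t
  · simp at h
  · show (Finsupp.lsum ℂ _) (Finsupp.single _ 1) = _
    rw [Finsupp.lsum_single]
    show (∑ i : Fin (n + 2), q ^ (i:ℕ) • Finsupp.lsingle (⟨n, d n i x⟩ : Σ n, S n)) 1 = _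
    rw [LinearMap.sum_apply,
      ← Fin.sum_univ_eq_sum_range
        (fun i => q ^ i • Finsupp.single (fc d i (⟨n+1, x⟩ : Σ n, S n)) (1:ℂ)) (n+2)]
    apply Finset.sum_congr rfl
    intro i _
    simp only [LinearMap.smul_apply, Finsupp.lsingle_apply]
    show q ^ (i:ℕ) • Finsupp.single (⟨n, d n i x⟩ : Σ n, S n) (1:ℂ)
      = q ^ (i:ℕ) • Finsupp.single (⟨n, d n ⟨min (i:ℕ) (n+1), by omega⟩ x⟩ : Σ n, S n) (1:ℂ)
    have hmin : (⟨min (i:ℕ) (n+1), by omega⟩ : Fin (n+2)) = i := by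
      apply Fin.ext
      simp only []
      omega
    rw [hmin]

/-- the set of strictly increasing lists of length `k` with entries `< R` -/
def MS (k R : ℕ) : Finset (List ℕ) := ((List.range R).sublistsLen k).toFinset

theorem mem_MS {M : List ℕ} {k R : ℕ} :
    M ∈ MS k R ↔ M.Pairwise (· < ·) ∧ M.length = k ∧ ∀ a ∈ M, a < R := by
  rw [MS, List.mem_toFinset, List.mem_sublistsLen]
  constructor
  · rintro ⟨hsub, hlen⟩
    refine ⟨(List.pairwise_lt_range (n := R)).sublist hsub, hlen, fun a ha => ?_⟩
    exact List.mem_range.mp (hsub.subset ha)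
  · rintro ⟨hpw, hlen, hbd⟩
    refine ⟨?_, hlen⟩
    have hnd : M.Nodup := hpw.imp (fun h => Nat.ne_of_lt h)
    have hperm : M.Perm ((List.range R).filter (fun a => decide (a ∈ M))) := by
      apply List.perm_of_nodup_nodup_toFinset_eq hnd
        ((List.nodup_range (n := R)).filter _)
      ext a
      simp only [List.mem_toFinset, List.mem_filter, List.mem_range, decide_eq_true_eq]
      exact ⟨fun ha => ⟨hbd a ha, ha⟩, fun h => h.2⟩
    have hsorted : List.Pairwise (· < ·) ((List.range R).filter (fun a => decide (a ∈ M))) :=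
      (List.pairwise_lt_range (n := R)).sublist List.filter_sublist
    rw [hperm.eq_of_pairwise (fun a b _ _ h1 h2 => absurd (h1.trans h2) (lt_irrefl _)) hpw hsorted]
    exact List.filter_sublist

/-- the q-factorial `[1]_q [2]_q ⋯ [k]_q` -/
def qfact : ℕ → ℂ
  | 0 => 1
  | k+1 => qfact k * qInt q (k+1)

/-- triangular numbers -/
def tri : ℕ → ℕ
  | 0 => 0
  | k+1 => tri k + k

/-- the insertion position for straightening -/
def sIdx (J : List ℕ) (i : ℕ) : ℕ :=
  ((Finset.range J.length).filter (fun u => J.getD u 0 ≤ i + u)).card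

theorem sIdx_le (J : List ℕ) (i : ℕ) : sIdx J i ≤ J.length := by
  calc ((Finset.range J.length).filter _).card ≤ (Finset.range J.length).card :=
        Finset.card_filter_le _ _
    _ = J.length := Finset.card_range _

theorem sIdx_spec (J : List ℕ) (i : ℕ) (hJ : J.Pairwise (· < ·)) :
    (∀ u, u < sIdx J i → J.getD u 0 ≤ i + u) ∧
      (∀ u, sIdx J i ≤ u → u < J.length → i + u < J.getD u 0) := by
  have hdc : ∀ a c : ℕ, a ≤ c → c < J.length → J.getD c 0 ≤ i + c → J.getD a 0 ≤ i + a := by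
    intro a c hac hc hPc
    have := getD_gap J hJ a c hac hc
    omega
  have := filter_card_prefix J.length (fun u => J.getD u 0 ≤ i + u) hdc
  exact ⟨this.1, fun u h1 h2 => by have := this.2 u h1 h2; omega⟩


/-- the reindexing bijection `(J, i) ↦ (insert, position)` for the straightening step -/
theorem reindex
    (hd : ∀ (n : ℕ) (i j : Fin (n + 2)), (j : ℕ) ≤ (i : ℕ) →
      ∀ x : S (n + 2), d n i (d (n + 1) j.castSucc x) = d n j (d (n + 1) i.succ x))
    (k : ℕ) (t : Σ n, S n) (hk : k + 1 ≤ t.1) :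
    ∑ p ∈ (MS k (t.1+1)) ×ˢ Finset.range (t.1 - k + 1),
        (q ^ (k + (p.1.sum + p.2))) • Finsupp.single (fc d p.2 (DmL d p.1 t)) (1:ℂ)
      = ∑ p ∈ (MS (k+1) (t.1+1)) ×ˢ Finset.range (k+1),
        (q ^ ((k - p.2) + p.1.sum)) • Finsupp.single (DmL d p.1 t) (1:ℂ) := by
  refine Finset.sum_nbij'
    (fun p => (p.1.insertIdx (sIdx p.1 p.2) (p.2 + sIdx p.1 p.2), sIdx p.1 p.2))
    (fun p => (p.1.eraseIdx p.2, p.1.getD p.2 0 - p.2)) ?_ ?_ ?_ ?_ ?_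
  · -- forward map lands in the target
    rintro ⟨J, i⟩ hp
    dsimp only
    rw [Finset.mem_product] at hp ⊢
    have hJ : J ∈ MS k (t.1+1) := hp.1
    have hi : i ∈ Finset.range (t.1 - k + 1) := hp.2
    obtain ⟨hpw, hlen, hbd⟩ := mem_MS.mp hJ
    rw [Finset.mem_range] at hi
    have hsJ : sIdx J i ≤ J.length := sIdx_le J i
    obtain ⟨h1, h2⟩ := sIdx_spec J i hpw
    constructor
    · rw [mem_MS]
      refine ⟨sorted_insertIdx J (sIdx J i) (i + sIdx J i) hpw hsJ ?_ ?_, ?_, ?_⟩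
      · intro u hu
        have := h1 u hu
        omega
      · intro u hu hu'
        have := h2 u hu hu'
        omega
      · rw [List.length_insertIdx_of_le_length hsJ, hlen]
      · intro a ha
        rcases (List.mem_insertIdx hsJ).mp ha with rfl | haJ
        · omega
        · exact hbd a haJ
    · rw [Finset.mem_range]
      omega
  · -- backward map lands in the source
    rintro ⟨L, s⟩ hp
    dsimp only
    rw [Finset.mem_product] at hp ⊢
    have hL : L ∈ MS (k+1) (t.1+1) := hp.1
    have hs : s ∈ Finset.range (k+1) := hp.2
    obtain ⟨hpw, hlen, hbd⟩ := mem_MS.mp hL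
    rw [Finset.mem_range] at hs
    have hsL : s < L.length := by omega
    have hgap : L.getD s 0 + (k - s) ≤ L.getD k 0 := getD_gap L hpw s k (by omega) (by omega)
    have hbk : L.getD k 0 < t.1 + 1 := by
      apply hbd
      rw [List.getD_eq_getElem L 0 (by omega)]
      exact List.getElem_mem _
    constructor
    · rw [mem_MS]
      refine ⟨List.Pairwise.sublist (List.eraseIdx_sublist L s) hpw, ?_, ?_⟩
      · rw [List.length_eraseIdx, if_pos hsL, hlen]
        omega
      · intro a ha
        exact hbd a ((List.eraseIdx_sublist L s).subset ha)
    · rw [Finset.mem_range]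
      omega
  · -- left inverse
    rintro ⟨J, i⟩ hp
    dsimp only
    rw [Finset.mem_product] at hp
    have hJ : J ∈ MS k (t.1+1) := hp.1
    have hi : i ∈ Finset.range (t.1 - k + 1) := hp.2
    have hsJ : sIdx J i ≤ J.length := sIdx_le J i
    simp only [Prod.mk.injEq]
    refine ⟨List.eraseIdx_insertIdx_self _, ?_⟩
    rw [getD_insertIdx_self' J _ _ hsJ]
    omega
  · -- right inverse
    rintro ⟨L, s⟩ hp
    dsimp only
    rw [Finset.mem_product] at hp
    have hL : L ∈ MS (k+1) (t.1+1) := hp.1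
    have hs : s ∈ Finset.range (k+1) := hp.2
    obtain ⟨hpw, hlen, hbd⟩ := mem_MS.mp hL
    rw [Finset.mem_range] at hs
    have hsL : s < L.length := by omega
    have hJlen : (L.eraseIdx s).length = k := by
      rw [List.length_eraseIdx, if_pos hsL, hlen]
      omega
    have hLs : s ≤ L.getD s 0 := by
      have := getD_gap L hpw 0 s (by omega) hsL
      omega
    have hsidx : sIdx (L.eraseIdx s) (L.getD s 0 - s) = s := by
      refine filter_card_eq _ s _ (by omega) ?_
      intro u hu
      rw [hJlen] at hu
      rcases Nat.lt_or_ge u s with husl | husl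
      · have heq : (L.eraseIdx s).getD u 0 = L.getD u 0 := getD_eraseIdx_lt L s u husl
        have := getD_gap L hpw u s (by omega) hsL
        rw [heq]
        constructor
        · intro _; exact husl
        · intro _; omega
      · have heq : (L.eraseIdx s).getD u 0 = L.getD (u+1) 0 := getD_eraseIdx_ge L s u husl
        have := getD_gap L hpw s (u+1) (by omega) (by omega)
        rw [heq]
        constructor
        · intro h; omega
        · intro h; omega
    simp only [Prod.mk.injEq]
    refine ⟨?_, hsidx⟩
    rw [hsidx, show L.getD s 0 - s + s = L.getD s 0 from by omega]
    exact insertIdx_getD_eraseIdx L s hsL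
  · -- values agree
    rintro ⟨J, i⟩ hp
    dsimp only
    rw [Finset.mem_product] at hp
    have hJ : J ∈ MS k (t.1+1) := hp.1
    have hi : i ∈ Finset.range (t.1 - k + 1) := hp.2
    obtain ⟨hpw, hlen, hbd⟩ := mem_MS.mp hJ
    rw [Finset.mem_range] at hi
    have hsJ : sIdx J i ≤ J.length := sIdx_le J i
    obtain ⟨h1, h2⟩ := sIdx_spec J i hpw
    have hfc : fc d i (DmL d J t) = DmL d (J.insertIdx (sIdx J i) (i + sIdx J i)) t :=
      fc_DmL d hd J i (sIdx J i) t (by omega) hsJ h1 h2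
    rw [hfc, sum_insertIdx' J (sIdx J i) (i + sIdx J i) hsJ]
    congr 2
    omega

/-- The main straightening formula for powers of the q-border. -/
theorem main_formula
    (hd : ∀ (n : ℕ) (i j : Fin (n + 2)), (j : ℕ) ≤ (i : ℕ) →
      ∀ x : S (n + 2), d n i (d (n + 1) j.castSucc x) = d n j (d (n + 1) i.succ x))
    (k : ℕ) (t : Σ n, S n) (hk : k ≤ t.1) :
    (q ^ tri k) • ((qBorderS q S d) ^ k) (Finsupp.single t 1)
      = qfact q k • ∑ M ∈ MS k (t.1 + 1), q ^ M.sum • Finsupp.single (DmL d M t) 1 := by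
  induction k with
  | zero =>
    simp [MS, qfact, tri, DmL]
  | succ k ih =>
    have hk' : k ≤ t.1 := by omega
    have htri : tri (k+1) = k + tri k := by
      show tri k + k = k + tri k
      omega
    have hqf : qfact q (k+1) = qfact q k * qInt q (k+1) := rfl
    have step1 : ((qBorderS q S d) ^ (k+1)) (Finsupp.single t (1:ℂ))
        = (qBorderS q S d) (((qBorderS q S d) ^ k) (Finsupp.single t (1:ℂ))) := by
      rw [pow_succ', Module.End.mul_apply]
    have hborder : ∀ M ∈ MS k (t.1 + 1),
        qBorderS q S d (Finsupp.single (DmL d M t) (1:ℂ))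
          = ∑ i ∈ Finset.range (t.1 - k + 1),
              q ^ i • Finsupp.single (fc d i (DmL d M t)) (1:ℂ) := by
      intro M hM
      have hfst : (DmL d M t).1 = t.1 - k := by
        rw [DmL_fst, (mem_MS.mp hM).2.1]
      rw [border_single d q _ (by omega), hfst]
    calc (q ^ tri (k+1)) • ((qBorderS q S d) ^ (k+1)) (Finsupp.single t (1:ℂ))
        = q ^ k • (qBorderS q S d)
            ((q ^ tri k) • ((qBorderS q S d) ^ k) (Finsupp.single t (1:ℂ))) := by
          rw [htri, pow_add, mul_smul, step1, map_smul]
      _ = q ^ k • (qBorderS q S d) (qfact q k •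
            ∑ M ∈ MS k (t.1+1), q ^ M.sum • Finsupp.single (DmL d M t) (1:ℂ)) := by
          rw [ih hk']
      _ = (q ^ k * qfact q k) • ∑ M ∈ MS k (t.1+1), q ^ M.sum •
            (qBorderS q S d) (Finsupp.single (DmL d M t) (1:ℂ)) := by
          rw [map_smul, map_sum, mul_smul]
          refine congrArg _ (congrArg _ (Finset.sum_congr rfl fun M _ => ?_))
          rw [map_smul]
      _ = (q ^ k * qfact q k) • ∑ M ∈ MS k (t.1+1), ∑ i ∈ Finset.range (t.1 - k + 1),
            (q ^ M.sum * q ^ i) • Finsupp.single (fc d i (DmL d M t)) (1:ℂ) := by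
          refine congrArg _ (Finset.sum_congr rfl fun M hM => ?_)
          rw [hborder M hM, Finset.smul_sum]
          refine Finset.sum_congr rfl fun i _ => ?_
          rw [smul_smul]
      _ = qfact q k • ∑ p ∈ (MS k (t.1+1)) ×ˢ Finset.range (t.1 - k + 1),
            (q ^ (k + (p.1.sum + p.2))) • Finsupp.single (fc d p.2 (DmL d p.1 t)) (1:ℂ) := by
          rw [Finset.sum_product, mul_comm (q ^ k) (qfact q k), mul_smul]
          refine congrArg _ ?_
          rw [Finset.smul_sum]
          refine Finset.sum_congr rfl fun M _ => ?_
          rw [Finset.smul_sum]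
          refine Finset.sum_congr rfl fun i _ => ?_
          rw [smul_smul, ← pow_add, ← pow_add]
      _ = qfact q k • ∑ p ∈ (MS (k+1) (t.1+1)) ×ˢ Finset.range (k+1),
            (q ^ ((k - p.2) + p.1.sum)) • Finsupp.single (DmL d p.1 t) (1:ℂ) := by
          exact congrArg _ (reindex d q hd k t hk)
      _ = qfact q (k+1) • ∑ M ∈ MS (k+1) (t.1+1),
            q ^ M.sum • Finsupp.single (DmL d M t) (1:ℂ) := by
          rw [Finset.sum_product]
          have hinner : ∀ L ∈ MS (k+1) (t.1+1),
              ∑ s ∈ Finset.range (k+1),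
                  (q ^ ((k - s) + L.sum)) • Finsupp.single (DmL d L t) (1:ℂ)
                = (qInt q (k+1) * q ^ L.sum) • Finsupp.single (DmL d L t) (1:ℂ) := by
            intro L _
            rw [← Finset.sum_smul]
            congr 1
            rw [qInt, Finset.sum_mul]
            simp only [← pow_add]
            rw [← Finset.sum_range_reflect (fun j => q ^ (j + L.sum)) (k+1)]
            refine Finset.sum_congr rfl fun s hs => ?_
            rw [Finset.mem_range] at hs
            exact congrArg (fun e => q ^ e) (by omega)
          rw [Finset.sum_congr rfl hinner, hqf, mul_smul]
          refine congrArg _ ?_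
          rw [Finset.smul_sum]
          refine Finset.sum_congr rfl fun L _ => ?_
          rw [smul_smul]


theorem kill (m : ℕ) : ∀ t : Σ n, S n, t.1 ≤ m →
    ((qBorderS q S d) ^ (m+1)) (Finsupp.single t (1:ℂ)) = 0 := by
  induction m with
  | zero =>
    intro t ht
    obtain ⟨(_|n), x⟩ := t
    · rw [pow_one]
      exact border_single_zero d q x 1
    · simp at ht
  | succ m ih =>
    intro t ht
    have hstep : ((qBorderS q S d) ^ (m+2)) (Finsupp.single t (1:ℂ))
        = ((qBorderS q S d) ^ (m+1)) (qBorderS q S d (Finsupp.single t (1:ℂ))) := by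
      rw [pow_succ, Module.End.mul_apply]
    rcases Nat.eq_zero_or_pos t.1 with h0 |h1
    · obtain ⟨(_|n), x⟩ := t
      · rw [hstep, border_single_zero d q x 1, map_zero]
      · simp at h0
    · rw [hstep, border_single d q t h1, map_sum]
      apply Finset.sum_eq_zero
      intro i _
      rw [map_smul, ih (fc d i t) (by rw [fc_fst]; omega), smul_zero]

end QBorderProof

/-- For a simplicial set with `∂ᵢ∂ⱼ = ∂ⱼ∂_{i+1}` for `j ≤ i` and `q` a primitive `N`-th
root of unity, the `N`-fold composition of the border `∂ = ∑ qⁱ ∂ᵢ` vanishes. -/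
theorem qBorder_pow_N_eq_zero (N : ℕ) (hN : 2 ≤ N) (q : ℂ) (hq : IsPrimitiveRoot q N)
    (S : ℕ → Type) (d : ∀ n : ℕ, Fin (n + 2) → S (n + 1) → S n)
    (hd : ∀ (n : ℕ) (i j : Fin (n + 2)), (j : ℕ) ≤ (i : ℕ) →
      ∀ x : S (n + 2), d n i (d (n + 1) j.castSucc x) = d n j (d (n + 1) i.succ x)) :
    qBorderS q S d ^ N = 0 := by
  have hq0 : q ≠ 0 := hq.ne_zero (by omega)
  have hqint : qInt q N = 0 := by
    rw [qInt]
    exact hq.geom_sum_eq_zero (by omega)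
  have hqfact : QBorderProof.qfact q N = 0 := by
    obtain ⟨N', rfl⟩ : ∃ N', N = N' + 1 := ⟨N - 1, by omega⟩
    show QBorderProof.qfact q N' * qInt q (N' + 1) = 0
    rw [hqint, mul_zero]
  apply Finsupp.lhom_ext fun t c => ?_
  rw [LinearMap.zero_apply,
    show Finsupp.single t c = c • Finsupp.single t (1:ℂ) from by
      rw [Finsupp.smul_single, smul_eq_mul, mul_one],
    map_smul]
  suffices h : ((qBorderS q S d) ^ N) (Finsupp.single t (1:ℂ)) = 0 by
    rw [h, smul_zero]
  rcases Nat.lt_or_ge t.1 N with hlt | hge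
  · obtain ⟨r, hr⟩ : ∃ r, N = r + (t.1 + 1) := ⟨N - (t.1 + 1), by omega⟩
    rw [hr, pow_add, Module.End.mul_apply, QBorderProof.kill d q t.1 t le_rfl, map_zero]
  · have hmain := QBorderProof.main_formula d q hd N t hge
    rw [hqfact, zero_smul] at hmain
    rcases smul_eq_zero.mp hmain with h | h
    · exact absurd h (pow_ne_zero _ hq0)
    · exact h
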